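/- arXiv:2011.03793 — 3 statements merged into one kernel-verified Lean document; each statement's English description precedes it below -/
import Mathlib

section
/- Assume the form [·,·] is indefinite. Let x ∈ H be a nonzero non-neutral element ([x, x] ≠ 0) and let α ∈ ℂ. Then for every real ε with ε > |[x, x]|^{1/2} · |1 − |α||, there exists a fundamental symmetry J of (H, [·,·]) such that |‖x‖_J − ‖α • x‖_J| < ε. -/
open scoped ComplexOrder
open ComplexConjugate

/-- The indefinite (Krein) inner ℂ product `[x, y] := ⟪J₀ x, y⟫` induced by the
continuous linear involution `J₀`. -/
noncomputable def kform {H : Type*} [NormedAddCommGroup H] [InnerProductSpace ℂ H]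
    (J₀ : H →L[ℂ] H) (x y : H) : ℂ :=
  inner ℂ (J₀ x) y

/-- `J` is a fundamental symmetry of the Krein space `(H, [·,·])`:
a continuous linear involution, `[·,·]`-selfadjoint, with `[J x, x] > 0` for `x ≠ 0`. -/
def IsFundamentalSymmetry {H : Type*} [NormedAddCommGroup H] [InnerProductSpace ℂ H]
    (J₀ : H →L[ℂ] H) (J : H →L[ℂ] H) : Prop :=
  (∀ x, J (J x) = x) ∧
  (∀ x y, kform J₀ (J x) y = kform J₀ x (J y)) ∧
  (∀ x, x ≠ 0 → 0 < kform J₀ (J x) x)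

/-- The `J`-norm `‖x‖_J := [J x, x] ^ (1/2)`. -/
noncomputable def jnorm {H : Type*} [NormedAddCommGroup H] [InnerProductSpace ℂ H]
    (J₀ : H →L[ℂ] H) (J : H →L[ℂ] H) (x : H) : ℝ :=
  Real.sqrt (kform J₀ (J x) x).re

private lemma inner_self_ofReal {H : Type*} [NormedAddCommGroup H] [InnerProductSpace ℂ H]
    (v : H) : (inner ℂ v v : ℂ) = ((‖v‖ ^ 2 : ℝ) : ℂ) := by
  rw [inner_self_eq_norm_sq_to_K]; norm_cast

set_option maxHeartbeats 1000000 in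
private lemma krein_aux {H : Type*} [NormedAddCommGroup H] [InnerProductSpace ℂ H]
    (J₀ : H →L[ℂ] H) (hinv : ∀ x, J₀ (J₀ x) = x)
    (hsa : ∀ x y : H, (inner ℂ (J₀ x) y : ℂ) = inner ℂ x (J₀ y))
    (x : H) (hx0 : x ≠ 0) (c : ℝ)
    (hc : (inner ℂ (J₀ x) x : ℂ) = (c : ℂ))
    (hcpos : 0 < c) (hne : c ^ 2 ≠ (‖x‖ ^ 2) ^ 2) :
    ∃ J : H →L[ℂ] H, IsFundamentalSymmetry J₀ J ∧ J x = x := by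
  set a : ℝ := ‖x‖ ^ 2 with ha_def
  have ha : 0 < a := by
    have := norm_pos_iff.mpr hx0
    positivity
  have hxx : (inner ℂ x x : ℂ) = (a : ℂ) := by
    rw [inner_self_eq_norm_sq_to_K]; norm_cast
  have hJJ : (inner ℂ (J₀ x) (J₀ x) : ℂ) = (a : ℂ) := by rw [hsa, hinv, hxx]
  have hxJ : (inner ℂ x (J₀ x) : ℂ) = (c : ℂ) := by rw [← hsa, hc]
  have hs1 : ∀ u v : H, (inner ℂ (J₀ u) (J₀ v) : ℂ) = inner ℂ u v := by
    intro u v; rw [hsa, hinv]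
  have hs2 : ∀ y : H, (inner ℂ x (J₀ y) : ℂ) = inner ℂ (J₀ x) y := fun y => (hsa x y).symm
  have hs4 : ∀ u : H, (inner ℂ (J₀ u) x : ℂ) = conj (inner ℂ (J₀ x) u) := by
    intro u; rw [← inner_conj_symm, hs2]
  have hs5 : ∀ u : H, (inner ℂ u x : ℂ) = conj (inner ℂ x u) := fun u => (inner_conj_symm u x).symm
  have hs6 : ∀ u : H, (inner ℂ u (J₀ x) : ℂ) = conj (inner ℂ (J₀ x) u) :=
    fun u => (inner_conj_symm u (J₀ x)).symm
  have hnJ : ‖J₀ x‖ = ‖x‖ := by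
    have h1 := hJJ
    rw [inner_self_eq_norm_sq_to_K] at h1
    rw [ha_def] at h1
    norm_cast at h1
    have h1' : ((‖J₀ x‖ ^ 2 : ℝ) : ℂ) = ((‖x‖ ^ 2 : ℝ) : ℂ) := h1
    have h2 : ‖J₀ x‖ ^ 2 = ‖x‖ ^ 2 := by exact_mod_cast h1'
    nlinarith [norm_nonneg (J₀ x), norm_nonneg x]
  have hca : c < a := by
    have hCS : ‖(inner ℂ (J₀ x) x : ℂ)‖ ≤ ‖J₀ x‖ * ‖x‖ := norm_inner_le_norm _ _
    rw [hc, hnJ] at hCS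
    have habs : |c| ≤ a := by
      simpa [ha_def, Complex.norm_real, sq] using hCS
    rcases lt_or_eq_of_le (le_trans (le_abs_self c) habs) with h | h
    · exact h
    · exact absurd (by rw [h]) hne
  have hcC : (c:ℂ) ≠ 0 := by exact_mod_cast hcpos.ne'
  have hapc : (a:ℂ) + (c:ℂ) ≠ 0 := by
    have h : (0:ℝ) < a + c := by linarith
    have : ((a + c : ℝ) : ℂ) ≠ 0 := by exact_mod_cast h.ne'
    push_cast at this; exact this
  have hamc : (a:ℂ) - (c:ℂ) ≠ 0 := by
    have h : (0:ℝ) < a - c := by linarith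
    have : ((a - c : ℝ) : ℂ) ≠ 0 := by exact_mod_cast h.ne'
    push_cast at this; exact this
  have ha2c : (a:ℂ) ^ 2 - (c:ℂ) ^ 2 ≠ 0 := by
    have h := mul_ne_zero hamc hapc
    intro h0; exact h (by linear_combination h0)
  have hc2a : (c:ℂ) ^ 2 - (a:ℂ) ^ 2 ≠ 0 := by
    intro h0; exact ha2c (by linear_combination -h0)
  set J : H →L[ℂ] H := J₀ + ((2 * (a:ℂ) + (c:ℂ)) / ((c:ℂ) * ((a:ℂ) + (c:ℂ)))) • ((innerSL ℂ (J₀ x)).smulRight x)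
      - (((a:ℂ) + (c:ℂ))⁻¹) • ((innerSL ℂ x).smulRight x)
      - (((a:ℂ) + (c:ℂ))⁻¹) • ((innerSL ℂ (J₀ x)).smulRight (J₀ x))
      - (((a:ℂ) + (c:ℂ))⁻¹) • ((innerSL ℂ x).smulRight (J₀ x)) with hJdef
  have hJapp : ∀ y, J y = J₀ y + (((2 * (a:ℂ) + (c:ℂ)) / ((c:ℂ) * ((a:ℂ) + (c:ℂ)))) * inner ℂ (J₀ x) y) • x
      - ((((a:ℂ) + (c:ℂ))⁻¹) * inner ℂ x y) • x - ((((a:ℂ) + (c:ℂ))⁻¹) * inner ℂ (J₀ x) y) • J₀ x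
      - ((((a:ℂ) + (c:ℂ))⁻¹) * inner ℂ x y) • J₀ x := by
    intro y
    simp [hJdef, ContinuousLinearMap.add_apply, ContinuousLinearMap.sub_apply,
      ContinuousLinearMap.smul_apply, ContinuousLinearMap.smulRight_apply, innerSL_apply_apply,
      smul_smul]
  have hJx : J x = x := by
    rw [hJapp, hc, hxx]
    match_scalars <;> (field_simp; try ring)
  have hJinvol : ∀ y, J (J y) = y := by
    intro y
    rw [hJapp y, hJapp]
    simp only [map_add, map_sub, map_smul, inner_add_right, inner_sub_right,
      inner_smul_right, hinv, hs1, hs2, hc, hxx, hxJ, hJJ]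
    match_scalars <;> (field_simp; try ring)
  have hJsym : ∀ u v : H, (inner ℂ (J₀ (J u)) v : ℂ) = inner ℂ (J₀ u) (J v) := by
    intro u v
    rw [hJapp u, hJapp v]
    simp only [map_add, map_sub, map_smul, inner_add_left, inner_sub_left, inner_smul_left,
      inner_add_right, inner_sub_right, inner_smul_right, hinv, hs1, hs2,
      hc, hxx, hxJ, hJJ, map_mul, map_div₀, map_inv₀, map_ofNat, Complex.conj_ofReal]
    simp only [hs4, hs5, map_mul, map_div₀, map_inv₀, map_ofNat, Complex.conj_ofReal]
    ring
  have hJpos : ∀ y, y ≠ 0 → 0 < (inner ℂ (J₀ (J y)) y : ℂ) := by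
    intro y hy
    have hkey : (inner ℂ (J₀ (J y)) y : ℂ)
        = (Complex.normSq (inner ℂ (J₀ x) y) : ℂ) * ((c:ℂ))⁻¹
          + (Complex.normSq ((c:ℂ) * inner ℂ x y - (a:ℂ) * inner ℂ (J₀ x) y) : ℂ)
              * ((c:ℂ) * ((a:ℂ) ^ 2 - (c:ℂ) ^ 2))⁻¹
          + inner ℂ (y - (((c:ℂ))⁻¹ * inner ℂ (J₀ x) y) • x
              - (((c:ℂ) * ((c:ℂ) ^ 2 - (a:ℂ) ^ 2))⁻¹
                  * ((c:ℂ) * inner ℂ x y - (a:ℂ) * inner ℂ (J₀ x) y))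
                • ((c:ℂ) • J₀ x - (a:ℂ) • x))
            (y - (((c:ℂ))⁻¹ * inner ℂ (J₀ x) y) • x
              - (((c:ℂ) * ((c:ℂ) ^ 2 - (a:ℂ) ^ 2))⁻¹
                  * ((c:ℂ) * inner ℂ x y - (a:ℂ) * inner ℂ (J₀ x) y))
                • ((c:ℂ) • J₀ x - (a:ℂ) • x)) := by
      rw [hJapp y]
      simp only [Complex.normSq_eq_conj_mul_self, map_add, map_sub, map_smul,
        inner_add_left, inner_sub_left, inner_smul_left, inner_add_right, inner_sub_right,
        inner_smul_right, hinv, hs1, hs2, hc, hxx, hxJ, hJJ,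
        map_mul, map_div₀, map_inv₀, map_ofNat, map_pow, Complex.conj_ofReal]
      simp only [hs4, hs5, hs6, map_mul, map_div₀, map_inv₀, map_ofNat, map_pow, map_sub,
        map_add, Complex.conj_ofReal]
      field_simp
      ring
    rw [hkey]
    rw [inner_self_ofReal]
    have hcast : (Complex.normSq (inner ℂ (J₀ x) y) : ℂ) * ((c:ℂ))⁻¹
          + (Complex.normSq ((c:ℂ) * inner ℂ x y - (a:ℂ) * inner ℂ (J₀ x) y) : ℂ)
              * ((c:ℂ) * ((a:ℂ) ^ 2 - (c:ℂ) ^ 2))⁻¹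
          + ((‖y - (((c:ℂ))⁻¹ * inner ℂ (J₀ x) y) • x
              - (((c:ℂ) * ((c:ℂ) ^ 2 - (a:ℂ) ^ 2))⁻¹
                  * ((c:ℂ) * inner ℂ x y - (a:ℂ) * inner ℂ (J₀ x) y))
                • ((c:ℂ) • J₀ x - (a:ℂ) • x)‖ ^ 2 : ℝ) : ℂ)
        = (((Complex.normSq (inner ℂ (J₀ x) y)) * c⁻¹
          + (Complex.normSq ((c:ℂ) * inner ℂ x y - (a:ℂ) * inner ℂ (J₀ x) y))
              * (c * (a ^ 2 - c ^ 2))⁻¹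
          + ‖y - (((c:ℂ))⁻¹ * inner ℂ (J₀ x) y) • x
              - (((c:ℂ) * ((c:ℂ) ^ 2 - (a:ℂ) ^ 2))⁻¹
                  * ((c:ℂ) * inner ℂ x y - (a:ℂ) * inner ℂ (J₀ x) y))
                • ((c:ℂ) • J₀ x - (a:ℂ) • x)‖ ^ 2 : ℝ) : ℂ) := by
      push_cast
      ring
    rw [hcast, Complex.zero_lt_real]
    have hd2 : (0:ℝ) < (c * (a ^ 2 - c ^ 2))⁻¹ := by
      have : 0 < a ^ 2 - c ^ 2 := by nlinarith [abs_nonneg c, le_abs_self c]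
      positivity
    have hc2 : (0:ℝ) < c⁻¹ := inv_pos.mpr hcpos
    have hn1 : 0 ≤ Complex.normSq (inner ℂ (J₀ x) y) := Complex.normSq_nonneg _
    have hn2 : 0 ≤ Complex.normSq ((c:ℂ) * inner ℂ x y - (a:ℂ) * inner ℂ (J₀ x) y) :=
      Complex.normSq_nonneg _
    by_cases hsz : (inner ℂ (J₀ x) y : ℂ) = 0
    · by_cases htz : (inner ℂ x y : ℂ) = 0
      · have hRy : y - (((c:ℂ))⁻¹ * inner ℂ (J₀ x) y) • x
              - (((c:ℂ) * ((c:ℂ) ^ 2 - (a:ℂ) ^ 2))⁻¹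
                  * ((c:ℂ) * inner ℂ x y - (a:ℂ) * inner ℂ (J₀ x) y))
                • ((c:ℂ) • J₀ x - (a:ℂ) • x) = y := by
          rw [hsz, htz]
          simp
        rw [hRy]
        have : 0 < ‖y‖ ^ 2 := by
          have := norm_pos_iff.mpr hy
          positivity
        nlinarith [mul_nonneg hn1 hc2.le, mul_nonneg hn2 hd2.le]
      · have he0 : (c:ℂ) * inner ℂ x y - (a:ℂ) * inner ℂ (J₀ x) y ≠ 0 := by
          rw [hsz]
          simpa [hcC] using htz
        have : 0 < Complex.normSq ((c:ℂ) * inner ℂ x y - (a:ℂ) * inner ℂ (J₀ x) y) :=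
          Complex.normSq_pos.mpr he0
        nlinarith [mul_nonneg hn1 hc2.le, sq_nonneg (‖y - (((c:ℂ))⁻¹ * inner ℂ (J₀ x) y) • x
              - (((c:ℂ) * ((c:ℂ) ^ 2 - (a:ℂ) ^ 2))⁻¹
                  * ((c:ℂ) * inner ℂ x y - (a:ℂ) * inner ℂ (J₀ x) y))
                • ((c:ℂ) • J₀ x - (a:ℂ) • x)‖), mul_pos this hd2]
    · have : 0 < Complex.normSq (inner ℂ (J₀ x) y) := Complex.normSq_pos.mpr hsz
      nlinarith [mul_nonneg hn2 hd2.le, sq_nonneg (‖y - (((c:ℂ))⁻¹ * inner ℂ (J₀ x) y) • x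
              - (((c:ℂ) * ((c:ℂ) ^ 2 - (a:ℂ) ^ 2))⁻¹
                  * ((c:ℂ) * inner ℂ x y - (a:ℂ) * inner ℂ (J₀ x) y))
                • ((c:ℂ) • J₀ x - (a:ℂ) • x)‖), mul_pos this hc2]
  exact ⟨J, ⟨hJinvol, fun u v => by simpa [kform] using hJsym u v,
    fun y hy => by simpa [kform] using hJpos y hy⟩, hJx⟩

set_option maxHeartbeats 1000000 in
theorem exists_fundamentalSymmetry_jnorm_sub_smul_lt_of_form_ne_zero
    {H : Type*} [NormedAddCommGroup H] [InnerProductSpace ℂ H] [CompleteSpace H]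
    (J₀ : H →L[ℂ] H)
    (hinv : ∀ x, J₀ (J₀ x) = x)
    (hsa : ∀ x y : H, (inner ℂ (J₀ x) y : ℂ) = inner ℂ x (J₀ y))
    (hindef : ∃ u v : H, 0 < kform J₀ u u ∧ kform J₀ v v < 0)
    (x : H) (hx0 : x ≠ 0) (hx : kform J₀ x x ≠ 0) (α : ℂ)
    (ε : ℝ) (hε : Real.sqrt ‖kform J₀ x x‖ * |1 - ‖α‖| < ε) :
    ∃ J : H →L[ℂ] H, IsFundamentalSymmetry J₀ J ∧
      |jnorm J₀ J x - jnorm J₀ J (α • x)| < ε := by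
  set c : ℝ := (inner ℂ (J₀ x) x : ℂ).re with hcdef
  have hc : (inner ℂ (J₀ x) x : ℂ) = (c : ℂ) := by
    have h : conj (inner ℂ (J₀ x) x : ℂ) = inner ℂ (J₀ x) x := by
      rw [inner_conj_symm]; exact (hsa x x).symm
    exact (Complex.conj_eq_iff_re.mp h).symm
  have hkc : kform J₀ x x = (c : ℂ) := hc
  have hc0 : c ≠ 0 := by
    intro h
    exact hx (by rw [hkc, h, Complex.ofReal_zero])
  set a : ℝ := ‖x‖ ^ 2 with ha_def
  have ha : 0 < a := by
    have := norm_pos_iff.mpr hx0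
    positivity
  have habs : ‖kform J₀ x x‖ = |c| := by
    rw [hkc, Complex.norm_real, Real.norm_eq_abs]
  have hε' : Real.sqrt |c| * |1 - ‖α‖| < ε := by rwa [habs] at hε
  have final : ∀ (J : H →L[ℂ] H) (r : ℝ),
      (inner ℂ (J₀ (J x)) x : ℂ) = (r : ℂ) →
      (inner ℂ (J₀ (J (α • x))) (α • x) : ℂ) = ((Complex.normSq α * r : ℝ) : ℂ) →
      |c| = r →
      |jnorm J₀ J x - jnorm J₀ J (α • x)| < ε := by
    intro J r h1 h2 h3
    have e1 : jnorm J₀ J x = Real.sqrt r := by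
      rw [jnorm]
      have : (kform J₀ (J x) x).re = r := by
        have : kform J₀ (J x) x = (r : ℂ) := h1
        rw [this, Complex.ofReal_re]
      rw [this]
    have e2 : jnorm J₀ J (α • x) = ‖α‖ * Real.sqrt r := by
      rw [jnorm]
      have h2' : (kform J₀ (J (α • x)) (α • x)).re = Complex.normSq α * r := by
        have : kform J₀ (J (α • x)) (α • x) = ((Complex.normSq α * r : ℝ) : ℂ) := h2
        rw [this, Complex.ofReal_re]
      rw [h2', Real.sqrt_mul (Complex.normSq_nonneg α), Complex.normSq_eq_norm_sq, Real.sqrt_sq (norm_nonneg α)]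
    rw [e1, e2]
    have e3 : Real.sqrt r - ‖α‖ * Real.sqrt r = Real.sqrt r * (1 - ‖α‖) := by
      ring
    rw [e3, abs_mul, abs_of_nonneg (Real.sqrt_nonneg r), ← h3]
    exact hε'
  by_cases hdeg : c ^ 2 = a ^ 2
  · -- degenerate case: use J₀ itself
    have hfs : IsFundamentalSymmetry J₀ J₀ := by
      refine ⟨hinv, ?_, ?_⟩
      · intro u v
        show (inner ℂ (J₀ (J₀ u)) v : ℂ) = inner ℂ (J₀ u) (J₀ v)
        rw [hinv, hsa, hinv]
      · intro y hy
        show 0 < (inner ℂ (J₀ (J₀ y)) y : ℂ)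
        rw [hinv, inner_self_ofReal, Complex.zero_lt_real]
        have := norm_pos_iff.mpr hy
        positivity
    refine ⟨J₀, hfs, final J₀ a ?_ ?_ ?_⟩
    · rw [hinv, inner_self_ofReal]
    · rw [hinv, inner_self_ofReal]
      congr 1
      rw [norm_smul, mul_pow, Complex.sq_norm]
    · rcases sq_eq_sq_iff_eq_or_eq_neg.mp hdeg with h | h
      · rw [h]; exact abs_of_nonneg ha.le
      · rw [h, abs_neg]; exact abs_of_nonneg ha.le
  · have hne : c ^ 2 ≠ (‖x‖ ^ 2) ^ 2 := by rwa [← ha_def]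
    rcases hc0.lt_or_gt with hneg | hpos
    · -- c < 0 : apply krein_aux with -J₀
      have hinv' : ∀ y, (-J₀) ((-J₀) y) = y := by
        intro y
        simp [hinv y]
      have hsa' : ∀ u v : H, (inner ℂ ((-J₀) u) v : ℂ) = inner ℂ u ((-J₀) v) := by
        intro u v
        simp only [ContinuousLinearMap.neg_apply, inner_neg_left, inner_neg_right, neg_inj]
        exact hsa u v
      have hc' : (inner ℂ ((-J₀) x) x : ℂ) = ((-c : ℝ) : ℂ) := by
        simp only [ContinuousLinearMap.neg_apply, inner_neg_left, hc]
        push_cast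
        ring
      obtain ⟨J', hfs', hJ'x⟩ := krein_aux (-J₀) hinv' hsa' x hx0 (-c) hc' (by linarith)
        (by rw [neg_sq]; exact hne)
      obtain ⟨h1, h2, h3⟩ := hfs'
      have hfs : IsFundamentalSymmetry J₀ (-J') := by
        refine ⟨?_, ?_, ?_⟩
        · intro y
          have := h1 y
          simpa using this
        · intro u v
          have := h2 u v
          simp only [kform, ContinuousLinearMap.neg_apply, map_neg, inner_neg_left,
            inner_neg_right, neg_inj] at this ⊢
          exact this
        · intro y hy
          have := h3 y hy
          simp only [kform, ContinuousLinearMap.neg_apply, map_neg, inner_neg_left,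
            inner_neg_right] at this ⊢
          exact this
      refine ⟨-J', hfs, final (-J') (-c) ?_ ?_ (abs_of_neg hneg)⟩
      · simp only [ContinuousLinearMap.neg_apply, hJ'x, map_neg, inner_neg_left, hc]
        push_cast
        ring
      · have hJax : (-J') (α • x) = -(α • x) := by
          simp [map_smul, hJ'x, smul_neg]
        rw [hJax]
        simp only [map_neg, inner_neg_left, map_smul, inner_smul_left, inner_smul_right, hc]
        push_cast [Complex.normSq_eq_conj_mul_self]
        ring
    · -- 0 < c : apply krein_aux directly
      obtain ⟨J, hfs, hJx⟩ := krein_aux J₀ hinv hsa x hx0 c hc hpos hne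
      refine ⟨J, hfs, final J c ?_ ?_ (abs_of_pos hpos)⟩
      · rw [hJx, hc]
      · have hJax : J (α • x) = α • x := by rw [map_smul, hJx]
        rw [hJax]
        simp only [map_smul, inner_smul_left, inner_smul_right, hc]
        push_cast [Complex.normSq_eq_conj_mul_self]
        ring
end

section
/- Let x ∈ H be a nonzero neutral element (x ≠ 0, [x, x] = 0) and let α ∈ ℂ. Then for every ε > 0 there exists a fundamental symmetry J of (H, [·,·]) such that |‖x‖_J − ‖α • x‖_J| < ε. -/
open scoped ComplexOrder
open ComplexConjugate

/-- Two-vector Bessel inequality. -/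
lemma bessel_two_aux {H : Type*} [NormedAddCommGroup H] [InnerProductSpace ℂ H]
    {u v : H} (y : H) {r : ℝ} (hr : 0 < r)
    (huu : (inner ℂ u u : ℂ) = ((r^2 : ℝ) : ℂ)) (hvv : (inner ℂ v v : ℂ) = ((r^2 : ℝ) : ℂ))
    (huv : (inner ℂ u v : ℂ) = 0) (hvu : (inner ℂ v u : ℂ) = 0) :
    Complex.normSq (inner ℂ u y : ℂ) + Complex.normSq (inner ℂ v y : ℂ) ≤ r^2 * ‖y‖^2 := by
  have hr2 : (0:ℝ) < r^2 := by positivity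
  have hr2c : ((r^2 : ℝ) : ℂ) ≠ 0 := by
    simpa using hr2.ne'
  set p : ℂ := inner ℂ u y with hp
  set q : ℂ := inner ℂ v y with hq
  have hyu : (inner ℂ y u : ℂ) = conj p := by rw [hp, inner_conj_symm]
  have hyv : (inner ℂ y v : ℂ) = conj q := by rw [hq, inner_conj_symm]
  set a : ℂ := p / ((r^2:ℝ):ℂ) with ha
  set b : ℂ := q / ((r^2:ℝ):ℂ) with hb
  set w : H := y - a • u - b • v with hw
  have key : (inner ℂ w w : ℂ)
      = inner ℂ y y - ((Complex.normSq p + Complex.normSq q : ℝ) : ℂ) / ((r^2:ℝ):ℂ) := by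
    rw [hw]
    simp only [inner_sub_left, inner_sub_right, inner_smul_left, inner_smul_right,
      huu, hvv, huv, hvu, ← hp, ← hq, hyu, hyv, ha, hb]
    push_cast
    rw [Complex.normSq_eq_conj_mul_self, Complex.normSq_eq_conj_mul_self]
    field_simp
    ring
  have hre := congrArg Complex.re key
  have h1 : (inner ℂ w w : ℂ).re = ‖w‖^2 := by
    have := inner_self_eq_norm_sq (𝕜 := ℂ) w
    simpa using this
  have h2 : (inner ℂ y y : ℂ).re = ‖y‖^2 := by
    have := inner_self_eq_norm_sq (𝕜 := ℂ) y
    simpa using this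
  rw [h1] at hre
  have hdiv : ((Complex.normSq p + Complex.normSq q : ℝ) : ℂ) / ((r^2:ℝ):ℂ)
      = (((Complex.normSq p + Complex.normSq q) / r^2 : ℝ) : ℂ) := by
    push_cast; ring
  rw [hdiv] at hre
  have hre' : ‖w‖^2 = ‖y‖^2 - (Complex.normSq p + Complex.normSq q) / r^2 := by
    have := hre
    rw [Complex.sub_re, h2, Complex.ofReal_re] at this
    linarith [this]
  have hwpos : (0:ℝ) ≤ ‖w‖^2 := by positivity
  rw [hre'] at hwpos
  have := (div_le_iff₀ hr2).mp (by linarith : (Complex.normSq p + Complex.normSq q) / r^2 ≤ ‖y‖^2)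
  linarith [this]

set_option maxHeartbeats 1000000 in
theorem exists_fundamentalSymmetry_jnorm_sub_smul_lt_of_neutral
    {H : Type*} [NormedAddCommGroup H] [InnerProductSpace ℂ H] [CompleteSpace H]
    (J₀ : H →L[ℂ] H)
    (hinv : ∀ x, J₀ (J₀ x) = x)
    (hsa : ∀ x y : H, (inner ℂ (J₀ x) y : ℂ) = inner ℂ x (J₀ y))
    (x : H) (hx0 : x ≠ 0) (hx : kform J₀ x x = 0) (α : ℂ)
    (ε : ℝ) (hε : 0 < ε) :
    ∃ J : H →L[ℂ] H, IsFundamentalSymmetry J₀ J ∧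
      |jnorm J₀ J x - jnorm J₀ J (α • x)| < ε := by
  classical
  have hr : (0:ℝ) < ‖x‖ := norm_pos_iff.mpr hx0
  obtain ⟨r, hrdef⟩ : ∃ r : ℝ, r = ‖x‖ := ⟨_, rfl⟩
  rw [← hrdef] at hr
  have hr2 : (0:ℝ) < r^2 := by positivity
  obtain ⟨v, hv⟩ : ∃ v : H, v = J₀ x := ⟨_, rfl⟩
  have huu : (inner ℂ x x : ℂ) = ((r^2:ℝ):ℂ) := by
    rw [inner_self_eq_norm_sq_to_K, hrdef]; norm_cast
  have hvu : (inner ℂ v x : ℂ) = 0 := by rw [hv]; exact hx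
  have huv : (inner ℂ x v : ℂ) = 0 := by
    rw [← inner_conj_symm, hvu, map_zero]
  have hvv : (inner ℂ v v : ℂ) = ((r^2:ℝ):ℂ) := by
    rw [hv, hsa, hinv, huu]
  have hJv : J₀ v = x := by rw [hv, hinv]
  -- the deformation parameter
  obtain ⟨t, htdef⟩ : ∃ t : ℝ, t = ε^2 / (2 * ((1 + ‖α‖) * r)^2) := ⟨_, rfl⟩
  have ha1 : (0:ℝ) < 1 + ‖α‖ := by positivity
  have ht : 0 < t := by rw [htdef]; positivity
  have hti : 0 < t⁻¹ := by positivity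
  obtain ⟨c₁, hc₁⟩ : ∃ c : ℂ, c = (((t - 1) / r^2 : ℝ) : ℂ) := ⟨_, rfl⟩
  obtain ⟨c₂, hc₂⟩ : ∃ c : ℂ, c = (((t⁻¹ - 1) / r^2 : ℝ) : ℂ) := ⟨_, rfl⟩
  set J : H →L[ℂ] H :=
    J₀ + (c₁ • ((innerSL ℂ x).smulRight v) + c₂ • ((innerSL ℂ v).smulRight x)) with hJ
  have hJapp : ∀ y, J y = J₀ y + (c₁ * inner ℂ x y) • v + (c₂ * inner ℂ v y) • x := by
    intro y
    simp [hJ, ContinuousLinearMap.add_apply, ContinuousLinearMap.smul_apply,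
      ContinuousLinearMap.smulRight_apply, innerSL_apply_apply, smul_smul, add_assoc]
  have hJ0J : ∀ y, J₀ (J y) = y + (c₁ * inner ℂ x y) • x + (c₂ * inner ℂ v y) • v := by
    intro y
    rw [hJapp y, map_add, map_add, map_smul, map_smul, hinv y, hJv, ← hv]
  have hform : ∀ y z, kform J₀ (J y) z
      = inner ℂ y z + c₁ * (conj (inner ℂ x y : ℂ) * inner ℂ x z)
        + c₂ * (conj (inner ℂ v y : ℂ) * inner ℂ v z) := by
    intro y z
    show (inner ℂ (J₀ (J y)) z : ℂ) = _
    rw [hJ0J]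
    simp only [inner_add_left, inner_smul_left, map_mul, hc₁, hc₂, Complex.conj_ofReal]
    ring
  have hr2c : ((r^2:ℝ):ℂ) ≠ 0 := by simpa using hr2.ne'
  have htc : ((t:ℝ):ℂ) ≠ 0 := by simpa using ht.ne'
  -- involution
  have hinner_uJ : ∀ y, (inner ℂ x (J y) : ℂ) = ((t⁻¹:ℝ):ℂ) * inner ℂ v y := by
    intro y
    rw [hJapp]
    simp only [inner_add_right, inner_smul_right, huu, huv]
    have h1 : (inner ℂ x (J₀ y) : ℂ) = inner ℂ v y := by rw [← hsa, ← hv]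
    rw [h1, hc₂]
    push_cast
    field_simp
    ring
  have hinner_vJ : ∀ y, (inner ℂ v (J y) : ℂ) = ((t:ℝ):ℂ) * inner ℂ x y := by
    intro y
    rw [hJapp]
    simp only [inner_add_right, inner_smul_right, hvv, hvu]
    have h1 : (inner ℂ v (J₀ y) : ℂ) = inner ℂ x y := by rw [hv, hsa, hinv]
    rw [h1, hc₁]
    push_cast
    field_simp
    ring
  have hJJ : ∀ y, J (J y) = y := by
    intro y
    rw [hJapp (J y), hJ0J, hinner_uJ, hinner_vJ]
    have e1 : c₁ * (((t⁻¹:ℝ):ℂ) * inner ℂ v y) = -(c₂ * inner ℂ v y) := by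
      rw [hc₁, hc₂]; push_cast; field_simp; ring
    have e2 : c₂ * (((t:ℝ):ℂ) * inner ℂ x y) = -(c₁ * inner ℂ x y) := by
      rw [hc₁, hc₂]; push_cast; field_simp; ring
    rw [e1, e2, neg_smul, neg_smul]
    abel
  -- symmetry
  have hsymm : ∀ y z, kform J₀ (J y) z = kform J₀ y (J z) := by
    intro y z
    have hR : kform J₀ y (J z) = inner ℂ y z + c₁ * (conj (inner ℂ x y : ℂ) * inner ℂ x z)
        + c₂ * (conj (inner ℂ v y : ℂ) * inner ℂ v z) := by
      show (inner ℂ (J₀ y) (J z) : ℂ) = _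
      rw [hsa y (J z), hJ0J z]
      simp only [inner_add_right, inner_smul_right]
      rw [show (inner ℂ y x : ℂ) = conj (inner ℂ x y : ℂ) from (inner_conj_symm _ _).symm,
        show (inner ℂ y v : ℂ) = conj (inner ℂ v y : ℂ) from (inner_conj_symm _ _).symm]
      ring
    rw [hform, hR]
  -- positivity
  have hpos : ∀ y, y ≠ 0 → 0 < kform J₀ (J y) y := by
    intro y hy
    rw [hform]
    obtain ⟨A, hA⟩ : ∃ A : ℝ, A = Complex.normSq (inner ℂ x y : ℂ) := ⟨_, rfl⟩
    obtain ⟨B, hB⟩ : ∃ B : ℝ, B = Complex.normSq (inner ℂ v y : ℂ) := ⟨_, rfl⟩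
    have hyy : (inner ℂ y y : ℂ) = ((‖y‖^2 : ℝ) : ℂ) := by
      rw [inner_self_eq_norm_sq_to_K]; norm_cast
    have hval : (inner ℂ y y : ℂ) + c₁ * (conj (inner ℂ x y : ℂ) * inner ℂ x y)
        + c₂ * (conj (inner ℂ v y : ℂ) * inner ℂ v y)
        = (((‖y‖^2 + (t-1)/r^2 * A + (t⁻¹-1)/r^2 * B : ℝ)) : ℂ) := by
      rw [hyy, ← Complex.normSq_eq_conj_mul_self, ← Complex.normSq_eq_conj_mul_self,
        hc₁, hc₂, ← hA, ← hB]
      push_cast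
      ring
    rw [hval, Complex.zero_lt_real]
    have hbes : A + B ≤ r^2 * ‖y‖^2 := by
      rw [hA, hB]; exact bessel_two_aux y hr huu hvv huv hvu
    have hA0 : 0 ≤ A := hA ▸ Complex.normSq_nonneg _
    have hB0 : 0 ≤ B := hB ▸ Complex.normSq_nonneg _
    have hN : (0:ℝ) < ‖y‖^2 := by
      have : (0:ℝ) < ‖y‖ := norm_pos_iff.mpr hy
      positivity
    obtain ⟨m, hm⟩ : ∃ m : ℝ, m = min t t⁻¹ := ⟨_, rfl⟩
    have hm0 : 0 < m := hm ▸ lt_min ht hti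
    have hmt : m ≤ t := hm ▸ min_le_left _ _
    have hmti : m ≤ t⁻¹ := hm ▸ min_le_right _ _
    have hm1 : m ≤ 1 := by
      rcases le_total t 1 with h | h
      · exact hmt.trans h
      · have h' : t⁻¹ ≤ 1 := by
          have h2 : t⁻¹ * t = 1 := inv_mul_cancel₀ ht.ne'
          nlinarith [mul_nonneg hti.le (by linarith : (0:ℝ) ≤ t - 1)]
        exact hmti.trans h'
    have key : 0 < r^2 * ‖y‖^2 - A - B + t * A + t⁻¹ * B := by
      nlinarith [mul_nonneg (sub_nonneg.mpr hmt) hA0, mul_nonneg (sub_nonneg.mpr hmti) hB0,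
        mul_nonneg (sub_nonneg.mpr hm1) (sub_nonneg.mpr hbes), mul_pos hm0 (mul_pos hr2 hN)]
    have heq : ‖y‖^2 + (t-1)/r^2 * A + (t⁻¹-1)/r^2 * B
        = (r^2 * ‖y‖^2 - A - B + t * A + t⁻¹ * B) / r^2 := by
      field_simp
      ring
    rw [heq]
    positivity
  -- the norm values
  have hkx : kform J₀ (J x) x = ((t * r^2 : ℝ) : ℂ) := by
    rw [hform, huu, hvu, hc₁, hc₂]
    simp only [map_zero, mul_zero, zero_mul, add_zero, Complex.conj_ofReal]
    push_cast
    field_simp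
    ring
  have hkax : kform J₀ (J (α • x)) (α • x) = ((Complex.normSq α * (t * r^2) : ℝ) : ℂ) := by
    show (inner ℂ (J₀ (J (α • x))) (α • x) : ℂ) = _
    rw [map_smul, map_smul, inner_smul_left, inner_smul_right]
    rw [show (inner ℂ (J₀ (J x)) x : ℂ) = ((t * r^2 : ℝ):ℂ) from hkx]
    rw [← mul_assoc, ← Complex.normSq_eq_conj_mul_self]
    push_cast
    ring
  have hj1 : jnorm J₀ J x = Real.sqrt t * r := by
    unfold jnorm
    rw [hkx, Complex.ofReal_re, Real.sqrt_mul ht.le, Real.sqrt_sq hr.le]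
  have hj2 : jnorm J₀ J (α • x) = ‖α‖ * (Real.sqrt t * r) := by
    unfold jnorm
    rw [hkax, Complex.ofReal_re, Real.sqrt_mul (Complex.normSq_nonneg α),
      Real.sqrt_mul ht.le, Real.sqrt_sq hr.le]
    rw [show Real.sqrt (Complex.normSq α) = ‖α‖ from by
      rw [Complex.norm_def]]
  refine ⟨J, ⟨hJJ, hsymm, hpos⟩, ?_⟩
  rw [hj1, hj2]
  have hst : Real.sqrt t * ((1 + ‖α‖) * r) < ε := by
    have h2 : (0:ℝ) < (1 + ‖α‖) * r := by positivity
    have hlt : Real.sqrt t < ε / ((1 + ‖α‖) * r) := by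
      rw [Real.sqrt_lt' (by positivity)]
      rw [htdef, div_pow]
      rw [div_lt_div_iff₀ (by positivity) (by positivity)]
      nlinarith [mul_pos (pow_pos hε 2) (pow_pos h2 2)]
    calc Real.sqrt t * ((1 + ‖α‖) * r) < ε / ((1 + ‖α‖) * r) * ((1 + ‖α‖) * r) :=
          mul_lt_mul_of_pos_right hlt h2
      _ = ε := by field_simp
  have hs0 : 0 ≤ Real.sqrt t * r := by positivity
  have habs : |Real.sqrt t * r - ‖α‖ * (Real.sqrt t * r)| = |1 - ‖α‖| * (Real.sqrt t * r) := by
    have h : Real.sqrt t * r - ‖α‖ * (Real.sqrt t * r) = (1 - ‖α‖) * (Real.sqrt t * r) := by ring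
    rw [h, abs_mul, abs_of_nonneg hs0]
  rw [habs]
  have h1a : |1 - ‖α‖| ≤ 1 + ‖α‖ := by
    rw [abs_sub_le_iff]
    constructor <;> linarith [norm_nonneg α]
  calc |1 - ‖α‖| * (Real.sqrt t * r) ≤ (1 + ‖α‖) * (Real.sqrt t * r) :=
        mul_le_mul_of_nonneg_right h1a hs0
    _ = Real.sqrt t * ((1 + ‖α‖) * r) := by ring
    _ < ε := hst
end

section
/- Let x, y ∈ H be linearly independent over ℂ and non-orthogonal ([x, y] ≠ 0), and suppose y is neutral ([y, y] = 0). Then there exists a sequence (J_n) of fundamental symmetries of (H, [·,·]) such that ‖y‖_{J_n} / ‖x‖_{J_n} → 0 as n → ∞. -/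
open scoped ComplexOrder

lemma aux_expand {H : Type*} [NormedAddCommGroup H] [InnerProductSpace ℂ H]
    (e z u : H) (hee : (inner ℂ e e : ℂ) = 1) (hzz : (inner ℂ z z : ℂ) = 1)
    (hez : (inner ℂ e z : ℂ) = 0) (hze : (inner ℂ z e : ℂ) = 0) :
    (inner ℂ (u - (inner ℂ e u : ℂ) • e - (inner ℂ z u : ℂ) • z)
      (u - (inner ℂ e u : ℂ) • e - (inner ℂ z u : ℂ) • z) : ℂ)
      = inner ℂ u u - Complex.normSq (inner ℂ e u) - Complex.normSq (inner ℂ z u) := by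
  simp only [inner_sub_left, inner_sub_right, inner_smul_left, inner_smul_right,
    hee, hzz, hez, hze, mul_zero, mul_one, ← Complex.normSq_eq_conj_mul_self]
  rw [← inner_conj_symm u e, ← inner_conj_symm u z]
  simp [← Complex.normSq_eq_conj_mul_self, Complex.mul_conj]

lemma coe_fix (x : ℝ) : (RCLike.ofReal x : ℂ) = Complex.ofReal x := rfl

set_option maxHeartbeats 1000000 in
theorem exists_fundamentalSymmetry_seq_jnorm_ratio_tendsto_zero_of_neutral
    {H : Type*} [NormedAddCommGroup H] [InnerProductSpace ℂ H] [CompleteSpace H]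
    (J₀ : H →L[ℂ] H)
    (hinv : ∀ x, J₀ (J₀ x) = x)
    (hsa : ∀ x y : H, (inner ℂ (J₀ x) y : ℂ) = inner ℂ x (J₀ y))
    (x y : H) (hli : LinearIndependent ℂ ![x, y])
    (hnonorth : kform J₀ x y ≠ 0) (hy : kform J₀ y y = 0) :
    ∃ J : ℕ → H →L[ℂ] H, (∀ n, IsFundamentalSymmetry J₀ (J n)) ∧
      Filter.Tendsto (fun n => jnorm J₀ (J n) y / jnorm J₀ (J n) x) Filter.atTop (nhds 0) := by
  classical
  have hy0 : y ≠ 0 := by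
    rintro rfl
    simp [kform] at hnonorth
  have hx0 : x ≠ 0 := by
    rintro rfl
    simp [kform, map_zero] at hnonorth
  set r : ℝ := ‖y‖ with hr_def
  have hr : 0 < r := norm_pos_iff.mpr hy0
  obtain ⟨e, he_def⟩ : ∃ e : H, e = ((r:ℂ)⁻¹) • y := ⟨_, rfl⟩
  obtain ⟨z, hz_def⟩ : ∃ z : H, z = J₀ e := ⟨_, rfl⟩
  have hrC : (r:ℂ) ≠ 0 := by exact_mod_cast hr.ne'
  have hJ0e : J₀ e = z := hz_def.symm
  have hJ0z : J₀ z = e := by rw [hz_def, hinv]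
  have hyy : (inner ℂ y y : ℂ) = (r:ℂ)^2 := by
    rw [inner_self_eq_norm_sq_to_K]; norm_cast
  have hee : (inner ℂ e e : ℂ) = 1 := by
    simp only [he_def, inner_smul_left, inner_smul_right, hyy, map_inv₀, Complex.conj_ofReal]
    field_simp
  have hze : (inner ℂ z e : ℂ) = 0 := by
    have : (inner ℂ (J₀ y) y : ℂ) = 0 := hy
    simp only [hz_def, he_def, map_smul, inner_smul_left, inner_smul_right, this,
      mul_zero]
  have hez : (inner ℂ e z : ℂ) = 0 := by
    rw [← inner_conj_symm, hze, map_zero]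
  have hzz : (inner ℂ z z : ℂ) = 1 := by
    rw [hz_def, hsa, hinv, hee]
  -- the sequence of fundamental symmetries
  set t : ℕ → ℝ := fun n => (n:ℝ) + 1 with ht_def
  have ht0 : ∀ n, (0:ℝ) < t n := fun n => by positivity
  have ht1 : ∀ n, (1:ℝ) ≤ t n := fun n => by simp [ht_def]
  have htC : ∀ n, (t n : ℂ) ≠ 0 := fun n => by exact_mod_cast (ht0 n).ne'
  set α : ℕ → ℝ := fun n => (t n)^2 - 1 with hα_def
  set β : ℕ → ℝ := fun n => ((t n)⁻¹)^2 - 1 with hβ_def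
  set J : ℕ → H →L[ℂ] H := fun n =>
    J₀ + ((α n : ℂ)) • ((innerSL ℂ z).smulRight e) + ((β n : ℂ)) • ((innerSL ℂ e).smulRight z)
    with hJ_def
  have hJapp : ∀ n v, J n v = J₀ v + ((α n : ℂ) * inner ℂ z v) • e + ((β n : ℂ) * inner ℂ e v) • z := by
    intro n v
    simp [hJ_def, ContinuousLinearMap.smulRight_apply, mul_smul, Complex.coe_smul]
  -- key formula for kform
  have hk : ∀ n u v, kform J₀ (J n u) v
      = inner ℂ u v + (α n : ℂ) * ((inner ℂ u z : ℂ) * inner ℂ z v)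
        + (β n : ℂ) * ((inner ℂ u e : ℂ) * inner ℂ e v) := by
    intro n u v
    rw [kform, hJapp, map_add, map_add, map_smul, map_smul, hinv, hJ0e, hJ0z]
    simp only [inner_add_left, inner_smul_left, map_mul, Complex.conj_ofReal,
      inner_conj_symm]
    ring
  have hk' : ∀ n u v, kform J₀ u (J n v)
      = inner ℂ u v + (α n : ℂ) * ((inner ℂ u z : ℂ) * inner ℂ z v)
        + (β n : ℂ) * ((inner ℂ u e : ℂ) * inner ℂ e v) := by
    intro n u v
    rw [kform, hJapp]
    simp only [inner_add_right, inner_smul_right]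
    rw [hsa u (J₀ v), hinv, hsa u e, hsa u z, hJ0e, hJ0z]
    ring
  -- master positivity formula
  have hmaster : ∀ n u, kform J₀ (J n u) u
      = ((‖u - (inner ℂ e u : ℂ) • e - (inner ℂ z u : ℂ) • z‖^2
          + ((t n)⁻¹)^2 * Complex.normSq (inner ℂ e u)
          + (t n)^2 * Complex.normSq (inner ℂ z u) : ℝ) : ℂ) := by
    intro n u
    have hwid := aux_expand e z u hee hzz hez hze
    have hw2 : ((‖u - (inner ℂ e u : ℂ) • e - (inner ℂ z u : ℂ) • z‖^2 : ℝ) : ℂ)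
        = inner ℂ u u - Complex.normSq (inner ℂ e u) - Complex.normSq (inner ℂ z u) := by
      rw [← hwid, inner_self_eq_norm_sq_to_K, coe_fix]
      push_cast
      ring
    rw [hk]
    have h1 : (inner ℂ u z : ℂ) * inner ℂ z u = (Complex.normSq (inner ℂ z u) : ℂ) := by
      rw [← inner_conj_symm u z, Complex.normSq_eq_conj_mul_self]
    have h2 : (inner ℂ u e : ℂ) * inner ℂ e u = (Complex.normSq (inner ℂ e u) : ℂ) := by
      rw [← inner_conj_symm u e, Complex.normSq_eq_conj_mul_self]
    rw [h1, h2]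
    push_cast [hw2, hα_def, hβ_def]
    ring
  have hze' : ∀ v, (inner ℂ z (J₀ v) : ℂ) = inner ℂ e v := fun v => by rw [← hsa, hJ0z]
  have hez' : ∀ v, (inner ℂ e (J₀ v) : ℂ) = inner ℂ z v := fun v => by rw [← hsa, hJ0e]
  have hαβ : ∀ n : ℕ, ((((n:ℂ)+1)^2 - 1) + (((n:ℂ)+1)⁻¹^2 - 1)
      + (((n:ℂ)+1)^2 - 1) * (((n:ℂ)+1)⁻¹^2 - 1)) = 0 := by
    intro n
    have hne : ((n:ℂ)+1) ≠ 0 := Nat.cast_add_one_ne_zero n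
    field_simp
    ring
  have hinvol : ∀ n v, J n (J n v) = v := by
    intro n v
    rw [hJapp, hJapp, map_add, map_add, map_smul, map_smul, hinv, hJ0e, hJ0z]
    simp only [inner_add_right, inner_smul_right, hee, hzz, hez, hze, hze' v, hez' v,
      mul_one, mul_zero, add_zero, zero_add]
    match_scalars
    · ring
    all_goals
      simp only [hα_def, hβ_def, ht_def]
      push_cast
      first
        | linear_combination (inner ℂ e v : ℂ) * hαβ n
        | linear_combination (inner ℂ z v : ℂ) * hαβ n
        | linear_combination ((inner ℂ z v : ℂ) - inner ℂ e v) * hαβ n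
        | linear_combination ((inner ℂ e v : ℂ) - inner ℂ z v) * hαβ n
  have hfund : ∀ n, IsFundamentalSymmetry J₀ (J n) := by
    intro n
    refine ⟨hinvol n, fun u v => by rw [hk, hk'], fun u hu => ?_⟩
    rw [hmaster n u, Complex.zero_lt_real]
    have hwid := aux_expand e z u hee hzz hez hze
    have hnid : ‖u - (inner ℂ e u : ℂ) • e - (inner ℂ z u : ℂ) • z‖^2
        = ‖u‖^2 - Complex.normSq (inner ℂ e u) - Complex.normSq (inner ℂ z u) := by
      have h := hwid
      rw [inner_self_eq_norm_sq_to_K, inner_self_eq_norm_sq_to_K, coe_fix, coe_fix] at h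
      exact_mod_cast h
    have hA := Complex.normSq_nonneg (inner ℂ e u : ℂ)
    have hB := Complex.normSq_nonneg (inner ℂ z u : ℂ)
    have hW : (0:ℝ) ≤ ‖u - (inner ℂ e u : ℂ) • e - (inner ℂ z u : ℂ) • z‖^2 := sq_nonneg _
    have hu2 : (0:ℝ) < ‖u‖^2 := pow_pos (norm_pos_iff.mpr hu) 2
    have hi : (0:ℝ) < (t n)⁻¹^2 := by positivity
    have hi1 : (t n)⁻¹^2 ≤ 1 := by
      have := ht1 n
      have h0 := ht0 n
      rw [inv_pow]
      rw [inv_le_one_iff₀]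
      right; nlinarith
    have hi2 : (t n)⁻¹^2 ≤ (t n)^2 := by
      have := ht1 n
      nlinarith [sq_nonneg ((t n) - (t n)⁻¹), mul_inv_cancel₀ (ht0 n).ne']
    nlinarith [mul_nonneg (sub_nonneg.2 hi1) hW, mul_nonneg (sub_nonneg.2 hi2) hB,
      mul_pos hi hu2]
  have hye : y = (r:ℂ) • e := by
    rw [he_def, smul_smul]
    rw [mul_inv_cancel₀ hrC, one_smul]
  have hjy : ∀ n, jnorm J₀ (J n) y = r * (t n)⁻¹ := by
    intro n
    have hky : kform J₀ (J n y) y = ((r^2 * ((t n)⁻¹)^2 : ℝ) : ℂ) := by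
      rw [hk]
      rw [hye]
      simp only [inner_smul_left, inner_smul_right, hee, hzz, hez, hze, Complex.conj_ofReal]
      push_cast [hβ_def]
      have h : (t n : ℝ) ≠ 0 := (ht0 n).ne'
      field_simp
      ring
    rw [jnorm, hky, Complex.ofReal_re,
      show r^2 * ((t n)⁻¹)^2 = (r * (t n)⁻¹)^2 by ring,
      Real.sqrt_sq (by positivity)]
  set b : ℂ := inner ℂ z x with hbdef
  have hb : b ≠ 0 := by
    have h1 : (inner ℂ (J₀ y) x : ℂ) = (starRingEnd ℂ) (kform J₀ x y) := by
      rw [kform, inner_conj_symm, hsa]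
    have h2 : b = (r:ℂ)⁻¹ * inner ℂ (J₀ y) x := by
      rw [hbdef, hz_def, he_def, map_smul, inner_smul_left, map_inv₀, Complex.conj_ofReal]
    rw [h2, h1]
    intro hc
    rcases mul_eq_zero.1 hc with hc1 | hc2
    · exact hrC (by simpa using hc1)
    · exact hnonorth (by simpa using congrArg (starRingEnd ℂ) hc2)
  have habs : (0:ℝ) < ‖b‖ := by
    simpa using norm_pos_iff.mpr hb
  have hjx : ∀ n, t n * ‖b‖ ≤ jnorm J₀ (J n) x := by
    intro n
    rw [jnorm, hmaster, Complex.ofReal_re]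
    have h : t n * ‖b‖
        = Real.sqrt ((t n)^2 * Complex.normSq b) := by
      rw [show (t n)^2 * Complex.normSq b = (t n * ‖b‖)^2 by
        rw [← Complex.sq_norm]; ring, Real.sqrt_sq (by positivity)]
    rw [h]
    apply Real.sqrt_le_sqrt
    have hA := Complex.normSq_nonneg (inner ℂ e x : ℂ)
    have hW : (0:ℝ) ≤ ‖x - (inner ℂ e x : ℂ) • e - (inner ℂ z x : ℂ) • z‖^2 := sq_nonneg _
    have hi : (0:ℝ) < (t n)⁻¹^2 := by positivity
    rw [← hbdef]
    linarith [mul_nonneg hi.le hA, hW]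
  refine ⟨J, hfund, ?_⟩
  have hnonneg : ∀ n, 0 ≤ jnorm J₀ (J n) y / jnorm J₀ (J n) x :=
    fun n => div_nonneg (Real.sqrt_nonneg _) (Real.sqrt_nonneg _)
  have hub : ∀ n, jnorm J₀ (J n) y / jnorm J₀ (J n) x
      ≤ (r / ‖b‖) * ((t n)^2)⁻¹ := by
    intro n
    have h1 : 0 < t n * ‖b‖ := mul_pos (ht0 n) habs
    have h2 : jnorm J₀ (J n) y / jnorm J₀ (J n) x
        ≤ jnorm J₀ (J n) y / (t n * ‖b‖) := by
      apply div_le_div_of_nonneg_left _ h1 (hjx n)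
      rw [hjy n]; positivity
    refine h2.trans ?_
    rw [hjy n]
    have h : (t n : ℝ) ≠ 0 := (ht0 n).ne'
    have heq : r * (t n)⁻¹ / (t n * ‖b‖) = (r / ‖b‖) * ((t n)^2)⁻¹ := by
      field_simp
    rw [heq]
  have hg : Filter.Tendsto (fun n => (r / ‖b‖) * (((t n):ℝ)^2)⁻¹)
      Filter.atTop (nhds 0) := by
    have h1 : Filter.Tendsto (fun n : ℕ => ((t n):ℝ)^2) Filter.atTop Filter.atTop := by
      have hb : Filter.Tendsto (fun n : ℕ => ((n:ℝ)+1)) Filter.atTop Filter.atTop :=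
        Filter.tendsto_atTop_add_const_right _ 1 tendsto_natCast_atTop_atTop
      exact (Filter.tendsto_pow_atTop (two_ne_zero)).comp hb
    have h2 := h1.inv_tendsto_atTop
    have h3 := h2.const_mul (r / ‖b‖)
    simpa using h3
  exact squeeze_zero hnonneg hub hg
end
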